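/- In ℤ[t] the identity Σ_{m=0}^{n} d_m(n)·(t−1)^{n−m} = Σ_w t^{|Desc(w)|} holds, where the right-hand sum runs over all 2^n·n! signed permutations w of {1, …, n}. In particular, for each i the Betti number β_{2i}(X(B_n)) equals the number of signed permutations of {1, …, n} with exactly i descents. -/

import Mathlib

/-- The set `𝓑` of nonempty subsets `B` of `{-n, …, -1, 1, …, n}` such that for no
`i ∈ {1, …, n}` both `i` and `-i` belong to `B`. -/
def calB (n : ℕ) : Set (Finset ℤ) :=
  {B | B.Nonempty ∧ (∀ z ∈ B, z ≠ 0 ∧ |z| ≤ (n : ℤ)) ∧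
    ∀ i : ℤ, 1 ≤ i → i ≤ (n : ℤ) → ¬(i ∈ B ∧ -i ∈ B)}

/-- `d_m(n)`: the number of chains `B^{(m)} ⊊ ⋯ ⊊ B^{(1)}` of `m` elements of `𝓑`
(the number of `m`-dimensional cones of the fan `Σ(B_n)`); `d_0(n) = 1`. -/
noncomputable def dB (n m : ℕ) : ℕ :=
  Set.ncard {c : Fin m → Finset ℤ |
    (∀ k l : Fin m, k < l → c l ⊂ c k) ∧ ∀ k, c k ∈ calB n}

/-- `w : Fin n → ℤ` is a signed permutation of `{1, …, n}`: a function to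
`{-n, …, -1, 1, …, n}` such that `k ↦ |w k|` is a bijection onto `{1, …, n}`.
(Here `w k` stands for the value `w(k+1)` of the paper, `k = 0, …, n-1`.) -/
def SignedPerm (n : ℕ) (w : Fin n → ℤ) : Prop :=
  (∀ k, 1 ≤ |w k| ∧ |w k| ≤ (n : ℤ)) ∧
  ∀ m : ℤ, 1 ≤ m → m ≤ (n : ℤ) → ∃! k : Fin n, |w k| = m

/-- The descent set `Desc(w) = {k ∈ {1, …, n} : w(k-1) > w(k)}` of a signed
permutation `w`, with the convention `w(0) = 0`. -/
def descSet (n : ℕ) (w : Fin n → ℤ) : Finset (Fin n) :=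
  Finset.univ.filter fun k : Fin n =>
    w k < (if (k : ℕ) = 0 then (0 : ℤ)
           else w ⟨(k : ℕ) - 1, lt_of_le_of_lt (Nat.sub_le _ _) k.isLt⟩)

open Finset

namespace Stmt9

/-- chains as in `dB` -/
def IsChn (n m : ℕ) (c : Fin m → Finset ℤ) : Prop :=
  (∀ k l : Fin m, k < l → c l ⊂ c k) ∧ ∀ k, c k ∈ calB n

/-- level functions -/
def IsG (n m : ℕ) (g : Fin n → ℤ) : Prop :=
  (∀ i, (g i).natAbs ≤ m) ∧ ∀ k : ℕ, 1 ≤ k → k ≤ m → ∃ i, (g i).natAbs = k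

def AMap (n m : ℕ) (g : Fin n → ℤ) : Fin m → Finset ℤ := fun k =>
  (Finset.univ.filter fun i : Fin n => (k : ℕ) + 1 ≤ (g i).natAbs).image
    fun i => Int.sign (g i) * ((i : ℕ) + 1)

open Classical in
noncomputable def BMap (n m : ℕ) (c : Fin m → Finset ℤ) : Fin n → ℤ := fun i =>
  if ∃ k : Fin m, ((i : ℕ) + 1 : ℤ) ∈ c k
  then ((Finset.univ.filter fun k : Fin m =>
      ((i : ℕ) + 1 : ℤ) ∈ c k ∨ -((i : ℕ) + 1 : ℤ) ∈ c k).card : ℤ)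
  else -((Finset.univ.filter fun k : Fin m =>
      ((i : ℕ) + 1 : ℤ) ∈ c k ∨ -((i : ℕ) + 1 : ℤ) ∈ c k).card : ℤ)

variable {n m : ℕ}

lemma chain_mono {c : Fin m → Finset ℤ} (hc : IsChn n m c) {k l : Fin m} (h : k ≤ l) :
    c l ⊆ c k := by
  rcases eq_or_lt_of_le h with rfl | h
  · exact Finset.Subset.refl _
  · exact (hc.1 k l h).subset

lemma chain_notboth {c : Fin m → Finset ℤ} (hc : IsChn n m c) {k l : Fin m} {x : ℤ}
    (hx : x ∈ c k) (hy : -x ∈ c l) : False := by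
  set j := min k l with hj
  have hxj : x ∈ c j := chain_mono hc (min_le_left k l) hx
  have hyj : -x ∈ c j := chain_mono hc (min_le_right k l) hy
  obtain ⟨-, habs, hnb⟩ := hc.2 j
  obtain ⟨hx0, hxn⟩ := habs x hxj
  rcases lt_trichotomy x 0 with h0 | h0 | h0
  · exact hnb (-x) (by omega) (by rw [abs_of_neg h0] at hxn; omega) ⟨hyj, by simpa using hxj⟩
  · exact hx0 h0
  · exact hnb x (by omega) (by rwa [abs_of_pos h0] at hxn) ⟨hxj, hyj⟩

/-- the unique index of an element of a chain member: `natAbs` of the image elements -/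
lemma natAbs_sign_mul {x : ℤ} (hx : x ≠ 0) (i : ℕ) :
    (Int.sign x * ((i : ℕ) + 1 : ℤ)).natAbs = i + 1 := by
  rcases lt_trichotomy x 0 with h | h | h
  · rw [Int.sign_eq_neg_one_iff_neg.mpr h]
    omega
  · exact absurd h hx
  · rw [Int.sign_eq_one_iff_pos.mpr h]
    omega

end Stmt9

namespace Stmt9
variable {n m : ℕ}

lemma lowerset_card {K : Finset (Fin m)} (hK : ∀ k l : Fin m, k ≤ l → l ∈ K → k ∈ K)
    (k : Fin m) : k ∈ K ↔ (k : ℕ) < K.card := by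
  constructor
  · intro h
    have hsub : Finset.Iic k ⊆ K := fun l hl => hK l k (Finset.mem_Iic.mp hl) h
    have := Finset.card_le_card hsub
    rw [Fin.card_Iic] at this; omega
  · intro h
    by_contra hk
    have hsub : K ⊆ Finset.Iio k := by
      intro l hl; rw [Finset.mem_Iio]
      rcases lt_or_ge l k with h' | h'
      · exact h'
      · exact absurd (hK k l h' hl) hk
    have := Finset.card_le_card hsub
    rw [Fin.card_Iio] at this; omega

lemma card_filter_lt (d : ℕ) (hd : d ≤ m) :
    (Finset.univ.filter fun k : Fin m => (k : ℕ) < d).card = d := by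
  rcases eq_or_lt_of_le hd with rfl | h
  · rw [Finset.filter_true_of_mem (fun k _ => k.isLt), Finset.card_univ, Fintype.card_fin]
  · have heq : (Finset.univ.filter fun k : Fin m => (k : ℕ) < d) = Finset.Iio ⟨d, h⟩ := by
      ext k; simp [Fin.lt_def]
    rw [heq, Fin.card_Iio]

def Kc (n m : ℕ) (c : Fin m → Finset ℤ) (i : Fin n) : Finset (Fin m) :=
  Finset.univ.filter fun k => ((i : ℕ) + 1 : ℤ) ∈ c k ∨ -((i : ℕ) + 1 : ℤ) ∈ c k

open Classical in
lemma natAbs_BMap (c : Fin m → Finset ℤ) (i : Fin n) :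
    (BMap n m c i).natAbs = (Kc n m c i).card := by
  unfold BMap Kc; split <;> simp

lemma mem_Kc_iff {c : Fin m → Finset ℤ} (hc : IsChn n m c) {i : Fin n} {k : Fin m} :
    k ∈ Kc n m c i ↔ (k : ℕ) < (Kc n m c i).card := by
  apply lowerset_card
  intro k l hkl hl
  simp only [Kc, Finset.mem_filter, Finset.mem_univ, true_and] at hl ⊢
  rcases hl with h | h
  · exact Or.inl (chain_mono hc hkl h)
  · exact Or.inr (chain_mono hc hkl h)

lemma mem_AMap {g : Fin n → ℤ} {k : Fin m} {x : ℤ} :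
    x ∈ AMap n m g k ↔
      ∃ i : Fin n, ((k : ℕ) + 1 ≤ (g i).natAbs ∧ Int.sign (g i) * ((i : ℕ) + 1) = x) := by
  simp [AMap]

lemma sign_mul_index_inj {g : Fin n → ℤ} {i i' : Fin n} (hi : g i ≠ 0) (hi' : g i' ≠ 0)
    (h : Int.sign (g i) * ((i : ℕ) + 1) = Int.sign (g i') * ((i' : ℕ) + 1)) : i = i' := by
  have h1 := natAbs_sign_mul hi i
  have h2 := natAbs_sign_mul hi' i'
  rw [h, h2] at h1
  exact Fin.ext (by omega)

lemma ne_zero_of_natAbs_le {g : Fin n → ℤ} {i : Fin n} {k : ℕ}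
    (h : k + 1 ≤ (g i).natAbs) : g i ≠ 0 := by
  intro h0; rw [h0] at h; simp at h

end Stmt9
namespace Stmt9
variable {n m : ℕ}

lemma AMap_isChn {g : Fin n → ℤ} (hg : IsG n m g) : IsChn n m (AMap n m g) := by
  have hwit : ∀ k : Fin m, ∃ i : Fin n, (g i).natAbs = (k : ℕ) + 1 := fun k =>
    hg.2 ((k : ℕ) + 1) (by omega) (by have := k.isLt; omega)
  have hmemself : ∀ k : Fin m, ∀ i : Fin n, (g i).natAbs = (k : ℕ) + 1 →
      Int.sign (g i) * ((i : ℕ) + 1) ∈ AMap n m g k := by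
    intro k i hi
    exact mem_AMap.mpr ⟨i, by omega, rfl⟩
  have hsub : ∀ k l : Fin m, k < l → AMap n m g l ⊆ AMap n m g k := by
    intro k l hkl x hx
    obtain ⟨i, hle, heq⟩ := mem_AMap.mp hx
    exact mem_AMap.mpr ⟨i, by have : (k : ℕ) < (l : ℕ) := hkl; omega, heq⟩
  constructor
  · intro k l hkl
    rw [Finset.ssubset_iff_of_subset (hsub k l hkl)]
    obtain ⟨i, hi⟩ := hwit k
    have hne : g i ≠ 0 := by intro h0; rw [h0] at hi; simp at hi
    refine ⟨Int.sign (g i) * ((i : ℕ) + 1), hmemself k i hi, ?_⟩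
    intro hmem
    obtain ⟨i', hle', heq'⟩ := mem_AMap.mp hmem
    have := sign_mul_index_inj (ne_zero_of_natAbs_le hle') hne heq'
    subst this
    have : (k : ℕ) < (l : ℕ) := hkl
    omega
  · intro k
    refine ⟨?_, ?_, ?_⟩
    · obtain ⟨i, hi⟩ := hwit k
      exact ⟨_, hmemself k i hi⟩
    · intro z hz
      obtain ⟨i, hle, heq⟩ := mem_AMap.mp hz
      have hne : g i ≠ 0 := ne_zero_of_natAbs_le hle
      have habs : z.natAbs = (i : ℕ) + 1 := by rw [← heq]; exact natAbs_sign_mul hne i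
      constructor
      · intro h0; rw [h0] at habs; simp at habs
      · have : |z| = (z.natAbs : ℤ) := Int.abs_eq_natAbs z
        have hin : (i : ℕ) < n := i.isLt
        omega
    · intro j hj1 hjn ⟨hj, hnj⟩
      obtain ⟨i, hle, heq⟩ := mem_AMap.mp hj
      obtain ⟨i', hle', heq'⟩ := mem_AMap.mp hnj
      have hne : g i ≠ 0 := ne_zero_of_natAbs_le hle
      have hne' : g i' ≠ 0 := ne_zero_of_natAbs_le hle'
      have h1 : j.natAbs = (i : ℕ) + 1 := by rw [← heq]; exact natAbs_sign_mul hne i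
      have h2 : (-j).natAbs = (i' : ℕ) + 1 := by rw [← heq']; exact natAbs_sign_mul hne' i'
      rw [Int.natAbs_neg] at h2
      have : i = i' := Fin.ext (by omega)
      subst this
      rw [heq] at heq'
      omega

lemma AMap_pos_mem_iff {g : Fin n → ℤ} {k : Fin m} {i : Fin n} :
    (((i : ℕ) + 1 : ℤ) ∈ AMap n m g k) ↔ ((k : ℕ) + 1 ≤ (g i).natAbs ∧ 0 < g i) := by
  rw [mem_AMap]
  constructor
  · rintro ⟨i', hle, heq⟩
    have hne' : g i' ≠ 0 := ne_zero_of_natAbs_le hle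
    have h1 : (((i : ℕ) + 1 : ℤ)).natAbs = (i' : ℕ) + 1 := by
      rw [← heq]; exact natAbs_sign_mul hne' i'
    have hii : i' = i := Fin.ext (by omega)
    subst hii
    have hs : Int.sign (g i') = 1 := by
      have hne2 : ((i' : ℕ) + 1 : ℤ) ≠ 0 := by positivity
      have := mul_right_cancel₀ hne2 (heq.trans (one_mul _).symm)
      exact this
    exact ⟨hle, Int.sign_eq_one_iff_pos.mp hs⟩
  · rintro ⟨hle, hpos⟩
    exact ⟨i, hle, by rw [Int.sign_eq_one_iff_pos.mpr hpos, one_mul]⟩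

lemma AMap_neg_mem_iff {g : Fin n → ℤ} {k : Fin m} {i : Fin n} :
    ((-((i : ℕ) + 1) : ℤ) ∈ AMap n m g k) ↔ ((k : ℕ) + 1 ≤ (g i).natAbs ∧ g i < 0) := by
  rw [mem_AMap]
  constructor
  · rintro ⟨i', hle, heq⟩
    have hne' : g i' ≠ 0 := ne_zero_of_natAbs_le hle
    have h1 : ((-((i : ℕ) + 1) : ℤ)).natAbs = (i' : ℕ) + 1 := by
      rw [← heq]; exact natAbs_sign_mul hne' i'
    rw [Int.natAbs_neg] at h1
    have hii : i' = i := Fin.ext (by omega)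
    subst hii
    have hs : Int.sign (g i') = -1 := by
      have hne2 : ((i' : ℕ) + 1 : ℤ) ≠ 0 := by positivity
      apply mul_right_cancel₀ hne2
      rw [heq]; ring
    exact ⟨hle, Int.sign_eq_neg_one_iff_neg.mp hs⟩
  · rintro ⟨hle, hneg⟩
    exact ⟨i, hle, by rw [Int.sign_eq_neg_one_iff_neg.mpr hneg]; ring⟩

open Classical in
lemma BMap_AMap {g : Fin n → ℤ} (hg : IsG n m g) : BMap n m (AMap n m g) = g := by
  funext i
  by_cases hgi : g i = 0
  · have hK : Kc n m (AMap n m g) i = ∅ := by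
      ext k
      simp only [Kc, Finset.mem_filter, Finset.mem_univ, true_and, Finset.notMem_empty,
        iff_false]
      rintro (h | h)
      · obtain ⟨-, h2⟩ := AMap_pos_mem_iff.mp h; omega
      · obtain ⟨-, h2⟩ := AMap_neg_mem_iff.mp h; omega
    have := natAbs_BMap (n := n) (m := m) (AMap n m g) i
    rw [hK] at this
    simp at this
    omega
  · have hK : Kc n m (AMap n m g) i =
        Finset.univ.filter fun k : Fin m => (k : ℕ) < (g i).natAbs := by
      ext k
      simp only [Kc, Finset.mem_filter, Finset.mem_univ, true_and]
      rw [AMap_pos_mem_iff, AMap_neg_mem_iff]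
      constructor
      · rintro (⟨h1, -⟩ | ⟨h1, -⟩) <;> omega
      · intro h
        rcases lt_or_gt_of_ne hgi with hlt | hgt
        · exact Or.inr ⟨by omega, hlt⟩
        · exact Or.inl ⟨by omega, hgt⟩
    have hcard : (Kc n m (AMap n m g) i).card = (g i).natAbs := by
      rw [hK]; exact card_filter_lt _ (hg.1 i)
    have hnaB := natAbs_BMap (n := n) (m := m) (AMap n m g) i
    rw [hcard] at hnaB
    rcases lt_or_gt_of_ne hgi with hlt | hgt
    · have hnex : ¬ ∃ k : Fin m, ((i : ℕ) + 1 : ℤ) ∈ AMap n m g k := by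
        rintro ⟨k, hk⟩
        obtain ⟨-, h2⟩ := AMap_pos_mem_iff.mp hk; omega
      have : BMap n m (AMap n m g) i = -((Kc n m (AMap n m g) i).card : ℤ) := by
        unfold BMap; rw [if_neg hnex]; rfl
      rw [this, hcard]; omega
    · have hm1 : 0 < m := by
        have h1 : 1 ≤ (g i).natAbs := by omega
        have := hg.1 i; omega
      have hex : ∃ k : Fin m, ((i : ℕ) + 1 : ℤ) ∈ AMap n m g k :=
        ⟨⟨0, hm1⟩, AMap_pos_mem_iff.mpr ⟨by simpa using by omega, hgt⟩⟩
      have : BMap n m (AMap n m g) i = ((Kc n m (AMap n m g) i).card : ℤ) := by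
        unfold BMap; rw [if_pos hex]; rfl
      rw [this, hcard]; omega

lemma BMap_isG {c : Fin m → Finset ℤ} (hc : IsChn n m c) : IsG n m (BMap n m c) := by
  constructor
  · intro i
    rw [natAbs_BMap]
    calc (Kc n m c i).card ≤ Finset.univ.card := Finset.card_le_card (Finset.filter_subset _ _)
    _ = m := by simp
  · intro k hk1 hkm
    obtain ⟨x, hx1, hupper⟩ : ∃ x : ℤ, x ∈ c ⟨k - 1, by omega⟩ ∧
        ∀ l : Fin m, k ≤ (l : ℕ) → x ∉ c l := by
      rcases eq_or_lt_of_le hkm with rfl | hlt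
      · obtain ⟨x, hx⟩ := (hc.2 ⟨k - 1, by omega⟩).1
        exact ⟨x, hx, fun l hl => absurd l.isLt (by omega)⟩
      · obtain ⟨x, hx, hnx⟩ := Finset.exists_of_ssubset
          (hc.1 ⟨k - 1, by omega⟩ ⟨k, hlt⟩ (by rw [Fin.lt_def]; simp; omega))
        refine ⟨x, hx, fun l hl hxl => hnx ?_⟩
        exact chain_mono hc (show (⟨k, hlt⟩ : Fin m) ≤ l by rw [Fin.le_def]; simpa) hxl
    obtain ⟨hx0, hxn⟩ := (hc.2 ⟨k - 1, by omega⟩).2.1 x hx1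
    have habs : (x.natAbs : ℤ) = |x| := (Int.abs_eq_natAbs x).symm
    have hna1 : 1 ≤ x.natAbs := Int.natAbs_pos.mpr hx0
    have hnan : x.natAbs ≤ n := by omega
    set i : Fin n := ⟨x.natAbs - 1, by omega⟩ with hi
    have hiv : ((i : ℕ) + 1 : ℤ) = (x.natAbs : ℤ) := by simp [hi]; omega
    have hxpm : x = ((i : ℕ) + 1 : ℤ) ∨ x = -((i : ℕ) + 1 : ℤ) := by
      rcases Int.natAbs_eq x with h | h
      · exact Or.inl (by omega)
      · exact Or.inr (by omega)
    have hkK : (⟨k - 1, by omega⟩ : Fin m) ∈ Kc n m c i := by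
      simp only [Kc, Finset.mem_filter, Finset.mem_univ, true_and]
      rcases hxpm with h | h
      · exact Or.inl (by rwa [← h])
      · exact Or.inr (by rw [show -((i : ℕ) + 1 : ℤ) = x by omega]; exact hx1)
    have hnot : ∀ l : Fin m, k ≤ (l : ℕ) → l ∉ Kc n m c i := by
      intro l hl hlK
      simp only [Kc, Finset.mem_filter, Finset.mem_univ, true_and] at hlK
      rcases hxpm with h | h
      · rcases hlK with hm1 | hm1
        · exact hupper l hl (by rwa [← h] at hm1)
        · exact chain_notboth hc hx1 (by rw [h]; exact hm1)
      · rcases hlK with hm1 | hm1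
        · exact chain_notboth hc hx1 (by rw [h]; simpa using hm1)
        · exact hupper l hl (by rwa [← h] at hm1)
    have h1 : k - 1 < (Kc n m c i).card := by
      have := (mem_Kc_iff hc).mp hkK
      simpa using this
    have h2 : (Kc n m c i).card ≤ k := by
      by_contra hlt
      push_neg at hlt
      have hcm : (Kc n m c i).card ≤ m :=
        le_trans (Finset.card_le_card (Finset.filter_subset _ _)) (by simp)
      have hkm' : k < m := by omega
      exact hnot ⟨k, hkm'⟩ (by simp) ((mem_Kc_iff hc).mpr (by simpa using hlt))
    exact ⟨i, by rw [natAbs_BMap]; omega⟩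

open Classical in
lemma AMap_BMap {c : Fin m → Finset ℤ} (hc : IsChn n m c) : AMap n m (BMap n m c) = c := by
  funext k; ext x
  constructor
  · intro hx
    obtain ⟨i, hle, heq⟩ := mem_AMap.mp hx
    rw [natAbs_BMap] at hle
    have hkK : k ∈ Kc n m c i := (mem_Kc_iff hc).mpr (by omega)
    have hKpos : 0 < (Kc n m c i).card := by omega
    have hmemK := (Finset.mem_filter.mp hkK).2
    by_cases hex : ∃ k' : Fin m, ((i : ℕ) + 1 : ℤ) ∈ c k'
    · have hB : BMap n m c i = ((Kc n m c i).card : ℤ) := by unfold BMap; rw [if_pos hex]; rfl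
      have hsign : Int.sign (BMap n m c i) = 1 :=
        Int.sign_eq_one_iff_pos.mpr (by rw [hB]; omega)
      rw [hsign, one_mul] at heq
      rcases hmemK with hm1 | hm1
      · rwa [heq] at hm1
      · obtain ⟨k', hk'⟩ := hex
        exact (chain_notboth hc hk' hm1).elim
    · have hB : BMap n m c i = -((Kc n m c i).card : ℤ) := by unfold BMap; rw [if_neg hex]; rfl
      have hsign : Int.sign (BMap n m c i) = -1 :=
        Int.sign_eq_neg_one_iff_neg.mpr (by rw [hB]; omega)
      rw [hsign] at heq
      rcases hmemK with hm1 | hm1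
      · exact absurd ⟨k, hm1⟩ hex
      · rw [show x = -((i : ℕ) + 1 : ℤ) by omega]
        exact hm1
  · intro hx
    obtain ⟨hx0, hxn⟩ := (hc.2 k).2.1 x hx
    have habs : (x.natAbs : ℤ) = |x| := (Int.abs_eq_natAbs x).symm
    have hna1 : 1 ≤ x.natAbs := Int.natAbs_pos.mpr hx0
    set i : Fin n := ⟨x.natAbs - 1, by omega⟩ with hi
    have hiv : ((i : ℕ) + 1 : ℤ) = (x.natAbs : ℤ) := by simp [hi]; omega
    have hxpm : x = ((i : ℕ) + 1 : ℤ) ∨ x = -((i : ℕ) + 1 : ℤ) := by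
      rcases Int.natAbs_eq x with h | h
      · exact Or.inl (by omega)
      · exact Or.inr (by omega)
    have hkK : k ∈ Kc n m c i := by
      simp only [Kc, Finset.mem_filter, Finset.mem_univ, true_and]
      rcases hxpm with h | h
      · exact Or.inl (by rwa [← h])
      · exact Or.inr (by rw [show -((i : ℕ) + 1 : ℤ) = x by omega]; exact hx)
    have hKpos : 0 < (Kc n m c i).card := by
      have := (mem_Kc_iff hc).mp hkK; omega
    rw [mem_AMap]
    refine ⟨i, by rw [natAbs_BMap]; have := (mem_Kc_iff hc).mp hkK; omega, ?_⟩
    rcases hxpm with h | h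
    · have hex : ∃ k' : Fin m, ((i : ℕ) + 1 : ℤ) ∈ c k' := ⟨k, by rwa [← h]⟩
      have hB : BMap n m c i = ((Kc n m c i).card : ℤ) := by unfold BMap; rw [if_pos hex]; rfl
      rw [Int.sign_eq_one_iff_pos.mpr (by rw [hB]; omega), one_mul]
      omega
    · have hex : ¬ ∃ k' : Fin m, ((i : ℕ) + 1 : ℤ) ∈ c k' := by
        rintro ⟨k', hk'⟩
        exact chain_notboth hc hk' (by rw [show -((i : ℕ) + 1 : ℤ) = x by omega]; exact hx)
      have hB : BMap n m c i = -((Kc n m c i).card : ℤ) := by unfold BMap; rw [if_neg hex]; rfl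
      rw [Int.sign_eq_neg_one_iff_neg.mpr (by rw [hB]; omega)]
      omega

end Stmt9
namespace Stmt9
variable {n m : ℕ}

def vG (n : ℕ) (g : Fin n → ℤ) (i : Fin n) : ℤ :=
  if g i = 0 then -((i : ℕ) + 1) else Int.sign (g i) * ((i : ℕ) + 1)

def keyG (n : ℕ) (g : Fin n → ℤ) (i : Fin n) : ℤ :=
  ((g i).natAbs : ℤ) * (2 * n + 2) - vG n g i

noncomputable def sortG (n : ℕ) (g : Fin n → ℤ) : Equiv.Perm (Fin n) :=
  Tuple.sort (keyG n g)

noncomputable def PhiW (n : ℕ) (g : Fin n → ℤ) (k : Fin n) : ℤ := vG n g (sortG n g k)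

/-- level along sorted order -/
noncomputable def levP (n : ℕ) (g : Fin n → ℤ) (k : Fin n) : ℕ := (g (sortG n g k)).natAbs

noncomputable def prevLevP (n : ℕ) (g : Fin n → ℤ) (k : Fin n) : ℕ :=
  if (k : ℕ) = 0 then 0
  else levP n g ⟨(k : ℕ) - 1, lt_of_le_of_lt (Nat.sub_le _ _) k.isLt⟩

noncomputable def PhiS (n : ℕ) (g : Fin n → ℤ) : Finset (Fin n) :=
  Finset.univ.filter fun k : Fin n => levP n g k = prevLevP n g k

def cntF (n : ℕ) (S : Finset (Fin n)) (k : Fin n) : ℕ :=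
  ((Finset.univ \ S).filter (· ≤ k)).card

noncomputable def PsiMap (n : ℕ) (w : Fin n → ℤ) (S : Finset (Fin n)) : Fin n → ℤ :=
  fun i => ∑ k ∈ Finset.univ.filter (fun k => |w k| = ((i : ℕ) + 1 : ℤ)),
    Int.sign (w k) * (cntF n S k)

lemma vG_natAbs (g : Fin n → ℤ) (i : Fin n) : (vG n g i).natAbs = (i : ℕ) + 1 := by
  unfold vG
  split
  · omega
  · exact natAbs_sign_mul (by assumption) i

lemma vG_bounds (g : Fin n → ℤ) (i : Fin n) : -(n : ℤ) ≤ vG n g i ∧ vG n g i ≤ n := by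
  have h := vG_natAbs g i
  have := i.isLt
  omega

lemma vG_inj {g : Fin n → ℤ} {i i' : Fin n} (h : vG n g i = vG n g i') : i = i' := by
  have h1 := vG_natAbs g i
  rw [h, vG_natAbs] at h1
  exact Fin.ext (by omega)

lemma keyG_lt_of_lev_lt {g : Fin n → ℤ} {i i' : Fin n}
    (h : (g i).natAbs < (g i').natAbs) : keyG n g i < keyG n g i' := by
  obtain ⟨h1, h2⟩ := vG_bounds g i
  obtain ⟨h1', h2'⟩ := vG_bounds g i'
  have hm : ((g i).natAbs : ℤ) + 1 ≤ ((g i').natAbs : ℤ) := by exact_mod_cast h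
  have hprod : (((g i).natAbs : ℤ) + 1) * (2 * n + 2) ≤ ((g i').natAbs : ℤ) * (2 * n + 2) :=
    mul_le_mul_of_nonneg_right hm (by positivity)
  unfold keyG
  nlinarith [hprod]

lemma keyG_inj {g : Fin n → ℤ} : Function.Injective (keyG n g) := by
  intro i i' h
  have hl : (g i).natAbs = (g i').natAbs := by
    by_contra hne
    rcases lt_or_gt_of_ne hne with hlt | hlt
    · exact absurd h (ne_of_lt (keyG_lt_of_lev_lt hlt))
    · exact absurd h.symm (ne_of_lt (keyG_lt_of_lev_lt hlt))
  have hv : vG n g i = vG n g i' := by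
    unfold keyG at h
    rw [hl] at h
    linarith
  exact vG_inj hv

lemma key_sorted (g : Fin n → ℤ) : Monotone (keyG n g ∘ (sortG n g)) :=
  Tuple.monotone_sort (keyG n g)

lemma key_strict (g : Fin n → ℤ) {k k' : Fin n} (h : k < k') :
    keyG n g (sortG n g k) < keyG n g (sortG n g k') := by
  have hle := key_sorted g h.le
  rcases eq_or_lt_of_le hle with heq | hlt
  · have := keyG_inj heq
    have := (sortG n g).injective this
    exact absurd this (ne_of_lt h)
  · exact hlt

lemma levP_mono (g : Fin n → ℤ) {k k' : Fin n} (h : k ≤ k') : levP n g k ≤ levP n g k' := by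
  by_contra hlt
  push_neg at hlt
  have h1 := keyG_lt_of_lev_lt (g := g) hlt
  have h2 := key_sorted g h
  simp only [Function.comp_apply] at h2
  unfold levP at h1
  linarith
  
lemma same_lev_v_lt (g : Fin n → ℤ) {k k' : Fin n} (h : k < k')
    (hl : levP n g k = levP n g k') : vG n g (sortG n g k') < vG n g (sortG n g k) := by
  have h1 := key_strict g h
  unfold keyG at h1
  unfold levP at hl
  rw [hl] at h1
  linarith

end Stmt9
namespace Stmt9
variable {n m : ℕ}

lemma PhiW_abs (g : Fin n → ℤ) (k : Fin n) :
    |PhiW n g k| = ((sortG n g k : ℕ) + 1 : ℤ) := by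
  have h := vG_natAbs g (sortG n g k)
  unfold PhiW
  rw [Int.abs_eq_natAbs, h]
  push_cast
  ring

lemma PhiW_signedPerm (g : Fin n → ℤ) : SignedPerm n (PhiW n g) := by
  constructor
  · intro k
    rw [PhiW_abs]
    have := (sortG n g k).isLt
    omega
  · intro M h1 hn
    obtain ⟨j, hj⟩ : ∃ j : Fin n, ((j : ℕ) + 1 : ℤ) = M :=
      ⟨⟨M.toNat - 1, by omega⟩, by simp; omega⟩
    refine ⟨(sortG n g).symm j, ?_, ?_⟩
    · show |PhiW n g ((sortG n g).symm j)| = M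
      rw [PhiW_abs, Equiv.apply_symm_apply, hj]
    · intro k hk
      have hk' : |PhiW n g k| = M := hk
      rw [PhiW_abs] at hk'
      clear hk
      have hkj : sortG n g k = j := Fin.ext (by omega)
      rw [← hkj, Equiv.symm_apply_apply]

lemma PhiS_subset (g : Fin n → ℤ) : PhiS n g ⊆ descSet n (PhiW n g) := by
  intro k hk
  simp only [PhiS, Finset.mem_filter, Finset.mem_univ, true_and] at hk
  simp only [descSet, Finset.mem_filter, Finset.mem_univ, true_and]
  unfold prevLevP at hk
  by_cases h0 : (k : ℕ) = 0
  · rw [if_pos h0] at hk ⊢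
    have hg0 : g (sortG n g k) = 0 := by
      unfold levP at hk
      omega
    unfold PhiW vG
    rw [if_pos hg0]
    have : (0:ℤ) < ((sortG n g k : ℕ) : ℤ) + 1 := by positivity
    linarith
  · rw [if_neg h0] at hk ⊢
    have hlt : (⟨(k : ℕ) - 1, lt_of_le_of_lt (Nat.sub_le _ _) k.isLt⟩ : Fin n) < k := by
      rw [Fin.lt_def]; simp; omega
    exact same_lev_v_lt g hlt hk.symm

lemma jump_inj_aux {g : Fin n → ℤ} {a1 a2 : Fin n}
    (h2 : ¬ levP n g a2 = prevLevP n g a2) (heq : levP n g a1 = levP n g a2)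
    (hlt : a1 < a2) : False := by
  have h0 : (a2 : ℕ) ≠ 0 := by
    have : (a1 : ℕ) < (a2 : ℕ) := hlt
    omega
  set kp : Fin n := ⟨(a2 : ℕ) - 1, lt_of_le_of_lt (Nat.sub_le _ _) a2.isLt⟩ with hkp
  have hle1 : a1 ≤ kp := by
    rw [Fin.le_def]
    have : (a1 : ℕ) < (a2 : ℕ) := hlt
    simp only [hkp]
    omega
  have hle2 : kp ≤ a2 := by
    rw [Fin.le_def]
    simp only [hkp]
    omega
  have hm1 := levP_mono g hle1
  have hm2 := levP_mono g hle2
  apply h2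
  unfold prevLevP
  rw [if_neg h0]
  have hfold : (⟨(a2 : ℕ) - 1, lt_of_le_of_lt (Nat.sub_le _ _) a2.isLt⟩ : Fin n) = kp := rfl
  rw [hfold]
  omega

lemma card_jump {g : Fin n → ℤ} (hg : IsG n m g) :
    (Finset.univ.filter fun k : Fin n => ¬ (levP n g k = prevLevP n g k)).card = m := by
  have hcard : (Finset.Icc 1 m).card = m := by rw [Nat.card_Icc]; omega
  rw [← hcard]
  apply Finset.card_bij (fun k _ => levP n g k)
  · -- maps into Icc 1 m
    intro k hk
    simp only [Finset.mem_filter, Finset.mem_univ, true_and] at hk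
    rw [Finset.mem_Icc]
    refine ⟨?_, hg.1 _⟩
    by_contra h
    push_neg at h
    have h0 : levP n g k = 0 := by omega
    unfold prevLevP at hk
    by_cases hk0 : (k : ℕ) = 0
    · rw [if_pos hk0] at hk; omega
    · rw [if_neg hk0] at hk
      have hle : (⟨(k : ℕ) - 1, lt_of_le_of_lt (Nat.sub_le _ _) k.isLt⟩ : Fin n) ≤ k := by
        rw [Fin.le_def]; simp
      have := levP_mono g hle
      omega
  · -- injective
    intro a1 h1 a2 h2 heq
    simp only [Finset.mem_filter, Finset.mem_univ, true_and] at h1 h2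
    by_contra hne
    have hne' : a1 ≠ a2 := hne
    rcases lt_or_gt_of_ne hne' with hlt | hlt
    · exact (jump_inj_aux h2 heq hlt).elim
    · exact (jump_inj_aux h1 heq.symm hlt).elim
  · -- surjective
    intro b hb
    rw [Finset.mem_Icc] at hb
    obtain ⟨i, hi⟩ := hg.2 b hb.1 hb.2
    have hne : (Finset.univ.filter fun k : Fin n => levP n g k = b).Nonempty := by
      refine ⟨(sortG n g).symm i, ?_⟩
      simp only [Finset.mem_filter, Finset.mem_univ, true_and]
      unfold levP
      rw [Equiv.apply_symm_apply]
      exact hi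
    set k0 := (Finset.univ.filter fun k : Fin n => levP n g k = b).min' hne with hk0
    have hk0mem := (Finset.univ.filter fun k : Fin n => levP n g k = b).min'_mem hne
    rw [← hk0] at hk0mem
    simp only [Finset.mem_filter, Finset.mem_univ, true_and] at hk0mem
    refine ⟨k0, ?_, hk0mem⟩
    simp only [Finset.mem_filter, Finset.mem_univ, true_and]
    unfold prevLevP
    by_cases h0 : (k0 : ℕ) = 0
    · rw [if_pos h0]; omega
    · rw [if_neg h0]
      set kp : Fin n := ⟨(k0 : ℕ) - 1, lt_of_le_of_lt (Nat.sub_le _ _) k0.isLt⟩ with hkp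
      intro hcontra
      have hkpmem : kp ∈ Finset.univ.filter fun k : Fin n => levP n g k = b := by
        simp only [Finset.mem_filter, Finset.mem_univ, true_and]
        rw [← hcontra, hk0mem]
      have := Finset.min'_le _ kp hkpmem
      rw [← hk0] at this
      have : k0 ≤ kp := this
      rw [Fin.le_def] at this
      simp [hkp] at this
      omega

end Stmt9
namespace Stmt9
variable {n m : ℕ}

lemma levP_le {g : Fin n → ℤ} (hg : IsG n m g) (k : Fin n) : levP n g k ≤ m := hg.1 _

lemma PhiS_card {g : Fin n → ℤ} (hg : IsG n m g) : (PhiS n g).card = n - m := by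
  have h := Finset.card_filter_add_card_filter_not
    (s := (Finset.univ : Finset (Fin n)))
    (p := fun k : Fin n => levP n g k = prevLevP n g k)
  rw [card_jump hg] at h
  simp only [Finset.card_univ, Fintype.card_fin] at h
  have : (PhiS n g).card = (Finset.univ.filter fun k : Fin n =>
      levP n g k = prevLevP n g k).card := rfl
  omega

lemma m_le_n {g : Fin n → ℤ} (hg : IsG n m g) : m ≤ n := by
  have h := Finset.card_filter_add_card_filter_not
    (s := (Finset.univ : Finset (Fin n)))
    (p := fun k : Fin n => levP n g k = prevLevP n g k)
  rw [card_jump hg] at h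
  simp only [Finset.card_univ, Fintype.card_fin] at h
  omega

lemma sdiff_PhiS (g : Fin n → ℤ) : Finset.univ \ PhiS n g =
    Finset.univ.filter fun k : Fin n => ¬ (levP n g k = prevLevP n g k) := by
  rw [Finset.filter_not]
  rfl

lemma cntT_zero (T : Finset (Fin n)) (a : Fin n) (ha : (a : ℕ) = 0) :
    (T.filter (· ≤ a)).card = if a ∈ T then 1 else 0 := by
  have heq : T.filter (· ≤ a) = T.filter (· = a) := by
    apply Finset.filter_congr
    intro x hx
    simp only [Fin.le_def, Fin.ext_iff]
    omega
  rw [heq, Finset.filter_eq']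
  split <;> simp

lemma cntT_succ (T : Finset (Fin n)) (a b : Fin n) (hab : (b : ℕ) = (a : ℕ) + 1) :
    (T.filter (· ≤ b)).card = (T.filter (· ≤ a)).card + (if b ∈ T then 1 else 0) := by
  have heq : T.filter (· ≤ b) = T.filter (· ≤ a) ∪ T.filter (· = b) := by
    rw [← Finset.filter_or]
    apply Finset.filter_congr
    intro x hx
    simp only [Fin.le_def, Fin.ext_iff]
    omega
  rw [heq, Finset.card_union_of_disjoint, Finset.filter_eq']
  · split <;> simp
  · rw [Finset.disjoint_left]
    intro x hx1 hx2
    simp only [Finset.mem_filter] at hx1 hx2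
    have h1 := hx1.2
    have h2 := hx2.2
    rw [Fin.le_def] at h1
    rw [Fin.ext_iff] at h2
    omega

lemma lev_zero_le {g : Fin n → ℤ} (hg : IsG n m g) (a : Fin n) (ha : (a : ℕ) = 0) :
    levP n g a ≤ 1 := by
  by_contra h
  push_neg at h
  have hm : 1 ≤ m := le_trans (by omega) (levP_le hg a)
  obtain ⟨i, hi⟩ := hg.2 1 le_rfl hm
  have hp : levP n g ((sortG n g).symm i) = 1 := by
    unfold levP
    rw [Equiv.apply_symm_apply]
    exact hi
  have := levP_mono g (show a ≤ (sortG n g).symm i by rw [Fin.le_def]; omega)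
  omega

lemma lev_succ_le {g : Fin n → ℤ} (hg : IsG n m g) (a b : Fin n)
    (hab : (b : ℕ) = (a : ℕ) + 1) : levP n g b ≤ levP n g a + 1 := by
  by_contra hcon
  push_neg at hcon
  have hble : levP n g a + 1 ≤ m := by
    have := levP_le hg b
    omega
  obtain ⟨i, hi⟩ := hg.2 (levP n g a + 1) (by omega) hble
  set p := (sortG n g).symm i with hp
  have hlevp : levP n g p = levP n g a + 1 := by
    unfold levP
    rw [hp, Equiv.apply_symm_apply]
    exact hi
  have h1 : ¬ p ≤ a := fun hle => by have := levP_mono g hle; omega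
  have h2 : ¬ b ≤ p := fun hle => by have := levP_mono g hle; omega
  rw [Fin.le_def] at h1 h2
  omega

lemma prevLev_succ (g : Fin n → ℤ) (a b : Fin n) (hab : (b : ℕ) = (a : ℕ) + 1) :
    prevLevP n g b = levP n g a := by
  unfold prevLevP
  rw [if_neg (by omega)]
  congr 1
  exact Fin.ext (by simp; omega)

lemma mem_jump_iff (g : Fin n → ℤ) (k : Fin n) :
    k ∈ Finset.univ \ PhiS n g ↔ ¬ (levP n g k = prevLevP n g k) := by
  rw [sdiff_PhiS, Finset.mem_filter]
  simp

lemma prevLev_zero (g : Fin n → ℤ) (a : Fin n) (ha : (a : ℕ) = 0) :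
    prevLevP n g a = 0 := by
  unfold prevLevP
  rw [if_pos ha]

lemma cnt_eq_lev {g : Fin n → ℤ} (hg : IsG n m g) :
    ∀ K : ℕ, ∀ hK : K < n, cntF n (PhiS n g) ⟨K, hK⟩ = levP n g ⟨K, hK⟩ := by
  intro K
  induction K with
  | zero =>
    intro hK
    unfold cntF
    rw [cntT_zero _ ⟨0, hK⟩ rfl]
    have hmem := mem_jump_iff g ⟨0, hK⟩
    have hprev := prevLev_zero g ⟨0, hK⟩ rfl
    have hle := lev_zero_le hg ⟨0, hK⟩ rfl
    split
    · rename_i hin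
      rw [hmem] at hin
      omega
    · rename_i hin
      rw [hmem] at hin
      push_neg at hin
      omega
  | succ K ih =>
    intro hK
    have hK' : K < n := by omega
    unfold cntF
    rw [cntT_succ _ ⟨K, hK'⟩ ⟨K + 1, hK⟩ rfl]
    have ihK := ih hK'
    unfold cntF at ihK
    rw [ihK]
    have hmem := mem_jump_iff g ⟨K + 1, hK⟩
    have hprev := prevLev_succ g ⟨K, hK'⟩ ⟨K + 1, hK⟩ rfl
    have hle := lev_succ_le hg ⟨K, hK'⟩ ⟨K + 1, hK⟩ rfl
    have hmono := levP_mono g (show (⟨K, hK'⟩ : Fin n) ≤ ⟨K + 1, hK⟩ by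
      rw [Fin.mk_le_mk]; omega)
    split
    · rename_i hin
      rw [hmem] at hin
      rw [hprev] at hin
      clear hmem ih ihK
      omega
    · rename_i hin
      rw [hmem] at hin
      push_neg at hin
      rw [hprev] at hin
      clear hmem ih ihK
      omega

end Stmt9
namespace Stmt9
variable {n m : ℕ}

lemma Psi_Phi {g : Fin n → ℤ} (hg : IsG n m g) : PsiMap n (PhiW n g) (PhiS n g) = g := by
  funext i
  unfold PsiMap
  have hfil : (Finset.univ.filter fun k => |PhiW n g k| = ((i : ℕ) + 1 : ℤ))
      = {(sortG n g).symm i} := by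
    ext k
    simp only [Finset.mem_filter, Finset.mem_univ, true_and, Finset.mem_singleton]
    rw [PhiW_abs]
    constructor
    · intro h
      have hki : sortG n g k = i := Fin.ext (by omega)
      rw [← hki, Equiv.symm_apply_apply]
    · rintro rfl
      rw [Equiv.apply_symm_apply]
  rw [hfil, Finset.sum_singleton]
  have hcnt : cntF n (PhiS n g) ((sortG n g).symm i) = (g i).natAbs := by
    have h1 := cnt_eq_lev hg ((sortG n g).symm i).val ((sortG n g).symm i).isLt
    have h2 : (⟨((sortG n g).symm i).val, ((sortG n g).symm i).isLt⟩ : Fin n)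
        = (sortG n g).symm i := rfl
    rw [h2] at h1
    rw [h1]
    unfold levP
    rw [Equiv.apply_symm_apply]
  unfold PhiW
  rw [Equiv.apply_symm_apply, hcnt]
  unfold vG
  split
  · rename_i h0
    rw [h0]
    simp
  · rename_i h0
    have hipos : (0 : ℤ) < ((i : ℕ) : ℤ) + 1 := by positivity
    rcases lt_or_gt_of_ne h0 with hneg | hpos
    · rw [Int.sign_eq_neg_one_iff_neg.mpr hneg]
      have hs : Int.sign ((-1 : ℤ) * (((i : ℕ) : ℤ) + 1)) = -1 :=
        Int.sign_eq_neg_one_iff_neg.mpr (by linarith)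
      rw [hs]
      omega
    · rw [Int.sign_eq_one_iff_pos.mpr hpos]
      have hs : Int.sign ((1 : ℤ) * (((i : ℕ) : ℤ) + 1)) = 1 :=
        Int.sign_eq_one_iff_pos.mpr (by linarith)
      rw [hs]
      omega

lemma wk_ne {w : Fin n → ℤ} (hw : SignedPerm n w) (k : Fin n) : w k ≠ 0 := by
  intro h
  have := (hw.1 k).1
  rw [h] at this
  simp at this

lemma wk_natAbs {w : Fin n → ℤ} (hw : SignedPerm n w) (k : Fin n) :
    1 ≤ (w k).natAbs ∧ (w k).natAbs ≤ n := by
  obtain ⟨h1, h2⟩ := hw.1 k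
  rw [Int.abs_eq_natAbs] at h1 h2
  omega

lemma SP_filter_singleton {w : Fin n → ℤ} (hw : SignedPerm n w) {i : Fin n} {k0 : Fin n}
    (hk0 : |w k0| = ((i : ℕ) + 1 : ℤ)) :
    (Finset.univ.filter fun k => |w k| = ((i : ℕ) + 1 : ℤ)) = {k0} := by
  have hex := hw.2 ((i : ℕ) + 1) (by omega) (by have := i.isLt; omega)
  obtain ⟨k1, hk1, huniq⟩ := hex
  have hk01 : k0 = k1 := huniq k0 hk0
  ext k
  simp only [Finset.mem_filter, Finset.mem_univ, true_and, Finset.mem_singleton]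
  constructor
  · intro h
    rw [hk01]
    exact huniq k h
  · rintro rfl
    exact hk0

lemma Psi_apply {w : Fin n → ℤ} (hw : SignedPerm n w) (S : Finset (Fin n)) {i k : Fin n}
    (hk : |w k| = ((i : ℕ) + 1 : ℤ)) :
    PsiMap n w S i = Int.sign (w k) * (cntF n S k : ℤ) := by
  unfold PsiMap
  rw [SP_filter_singleton hw hk, Finset.sum_singleton]

lemma neg_of_cnt_zero {w : Fin n → ℤ} {S : Finset (Fin n)} (hS : S ⊆ descSet n w) :
    ∀ K : ℕ, ∀ hK : K < n, cntF n S ⟨K, hK⟩ = 0 → w ⟨K, hK⟩ < 0 := by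
  intro K
  induction K with
  | zero =>
    intro hK hcnt
    unfold cntF at hcnt
    rw [cntT_zero _ ⟨0, hK⟩ rfl] at hcnt
    have hmem : (⟨0, hK⟩ : Fin n) ∈ S := by
      by_contra hnot
      rw [if_pos (by rw [Finset.mem_sdiff]; exact ⟨Finset.mem_univ _, hnot⟩)] at hcnt
      omega
    have hdesc := hS hmem
    simp only [descSet, Finset.mem_filter, Finset.mem_univ, true_and] at hdesc
    simpa using hdesc
  | succ K ih =>
    intro hK hcnt
    have hK' : K < n := by omega
    unfold cntF at hcnt
    rw [cntT_succ _ ⟨K, hK'⟩ ⟨K + 1, hK⟩ rfl] at hcnt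
    have hprev : w ⟨K, hK'⟩ < 0 := by
      apply ih hK'
      unfold cntF
      omega
    have hmem : (⟨K + 1, hK⟩ : Fin n) ∈ S := by
      by_contra hnot
      rw [if_pos (by rw [Finset.mem_sdiff]; exact ⟨Finset.mem_univ _, hnot⟩)] at hcnt
      omega
    have hdesc := hS hmem
    simp only [descSet, Finset.mem_filter, Finset.mem_univ, true_and] at hdesc
    rw [if_neg (by simp)] at hdesc
    have hidx : (⟨(K + 1 : ℕ) - 1, lt_of_le_of_lt (Nat.sub_le _ _) (⟨K+1, hK⟩ : Fin n).isLt⟩ : Fin n)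
        = ⟨K, hK'⟩ := Fin.ext (by simp)
    rw [hidx] at hdesc
    linarith

end Stmt9
namespace Stmt9
variable {n m : ℕ}

lemma sign_natAbs {x : ℤ} (h : x ≠ 0) : (Int.sign x).natAbs = 1 := by
  rcases lt_or_gt_of_ne h with h1 | h1
  · rw [Int.sign_eq_neg_one_iff_neg.mpr h1]; rfl
  · rw [Int.sign_eq_one_iff_pos.mpr h1]; rfl

lemma sdiff_card {S : Finset (Fin n)} (hcard : S.card = n - m) (hmn : m ≤ n) :
    (Finset.univ \ S).card = m := by
  rw [Finset.card_sdiff_of_subset (Finset.subset_univ S), Finset.card_univ, Fintype.card_fin, hcard]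
  have := Finset.card_le_univ S
  omega

lemma cnt_orderIso {T : Finset (Fin n)} {mm : ℕ} (hT : T.card = mm) (j : Fin mm) :
    (T.filter (· ≤ (T.orderIsoOfFin hT j : Fin n))).card = (j : ℕ) + 1 := by
  have himg : T.filter (· ≤ (T.orderIsoOfFin hT j : Fin n))
      = (Finset.Iic j).image (fun j' => (T.orderIsoOfFin hT j' : Fin n)) := by
    ext x
    simp only [Finset.mem_filter, Finset.mem_image, Finset.mem_Iic]
    constructor
    · rintro ⟨hxT, hxle⟩
      refine ⟨(T.orderIsoOfFin hT).symm ⟨x, hxT⟩, ?_, ?_⟩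
      · rw [← OrderIso.le_iff_le (T.orderIsoOfFin hT), OrderIso.apply_symm_apply]
        exact Subtype.coe_le_coe.mp hxle
      · rw [OrderIso.apply_symm_apply]
    · rintro ⟨j', hj', rfl⟩
      refine ⟨(T.orderIsoOfFin hT j').2, ?_⟩
      exact Subtype.coe_le_coe.mpr ((T.orderIsoOfFin hT).monotone hj')
  rw [himg, Finset.card_image_of_injOn
    (fun a _ b _ hab => (T.orderIsoOfFin hT).injective (Subtype.val_injective hab)),
    Fin.card_Iic]

lemma Psi_isG {w : Fin n → ℤ} {S : Finset (Fin n)} (hw : SignedPerm n w)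
    (hcard : S.card = n - m) (hmn : m ≤ n) : IsG n m (PsiMap n w S) := by
  have hT : (Finset.univ \ S).card = m := sdiff_card hcard hmn
  constructor
  · intro i
    obtain ⟨k0, hk0, -⟩ := hw.2 ((i : ℕ) + 1) (by omega) (by have := i.isLt; omega)
    rw [Psi_apply hw S hk0, Int.natAbs_mul, sign_natAbs (wk_ne hw k0), one_mul,
      Int.natAbs_natCast]
    calc cntF n S k0 ≤ (Finset.univ \ S).card :=
          Finset.card_le_card (Finset.filter_subset _ _)
    _ = m := hT
  · intro L hL1 hLm
    set e := (Finset.univ \ S).orderIsoOfFin hT with he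
    set t : Fin n := (e ⟨L - 1, by omega⟩ : Fin n) with ht
    have hcnt : cntF n S t = L := by
      unfold cntF
      rw [ht, he, cnt_orderIso]
      simp
      omega
    obtain ⟨hna1, hnan⟩ := wk_natAbs hw t
    set i : Fin n := ⟨(w t).natAbs - 1, by omega⟩ with hi
    have habs : |w t| = ((i : ℕ) + 1 : ℤ) := by
      have hival : (i : ℕ) = (w t).natAbs - 1 := rfl
      rw [Int.abs_eq_natAbs, hival]
      omega
    refine ⟨i, ?_⟩
    rw [Psi_apply hw S habs, Int.natAbs_mul, sign_natAbs (wk_ne hw t), one_mul,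
      Int.natAbs_natCast, hcnt]

lemma fin_mono_of_succ {α : Type*} [Preorder α] {f : Fin n → α}
    (h : ∀ a b : Fin n, (b : ℕ) = (a : ℕ) + 1 → f a ≤ f b) : Monotone f := by
  have key : ∀ d : ℕ, ∀ a b : Fin n, (b : ℕ) = (a : ℕ) + d → f a ≤ f b := by
    intro d
    induction d with
    | zero =>
      intro a b hab
      have hab' : a = b := Fin.ext (by omega)
      rw [hab']
    | succ d ihd =>
      intro a b hab
      have hb' : (a : ℕ) + d < n := by have := b.isLt; omega
      exact le_trans (ihd a ⟨(a : ℕ) + d, hb'⟩ rfl) (h ⟨(a : ℕ) + d, hb'⟩ b (by simp; omega))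
  intro a b hab
  rw [Fin.le_def] at hab
  exact key ((b : ℕ) - (a : ℕ)) a b (by omega)

lemma Phi_Psi {w : Fin n → ℤ} {S : Finset (Fin n)} (hw : SignedPerm n w)
    (hS : S ⊆ descSet n w) :
    PhiW n (PsiMap n w S) = w ∧ PhiS n (PsiMap n w S) = S := by
  set g := PsiMap n w S with hg
  have htb : ∀ k : Fin n, (w k).natAbs - 1 < n := fun k => by
    have := wk_natAbs hw k; omega
  set tf : Fin n → Fin n := fun k => ⟨(w k).natAbs - 1, htb k⟩ with htf
  have habs : ∀ k, |w k| = ((tf k : ℕ) + 1 : ℤ) := by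
    intro k
    have hb := wk_natAbs hw k
    have hval : (tf k : ℕ) = (w k).natAbs - 1 := rfl
    rw [Int.abs_eq_natAbs, hval]
    omega
  have htinj : Function.Injective tf := by
    intro k k' hkk
    have h1 := habs k
    have h2 := habs k'
    rw [hkk, ← h2] at h1
    obtain ⟨h1b, h2b⟩ := hw.1 k
    obtain ⟨k1, hk1, huniq⟩ := hw.2 (|w k|) h1b h2b
    rw [huniq k rfl, huniq k' h1.symm]
  set τ : Equiv.Perm (Fin n) := Equiv.ofBijective tf
    (Finite.injective_iff_bijective.mp htinj) with hτ
  have hτap : ∀ k, τ k = tf k := fun k => rfl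
  have hgt : ∀ k, g (tf k) = Int.sign (w k) * (cntF n S k : ℤ) := by
    intro k
    exact Psi_apply hw S (habs k)
  have hlev : ∀ k, (g (tf k)).natAbs = cntF n S k := by
    intro k
    rw [hgt k, Int.natAbs_mul, sign_natAbs (wk_ne hw k), one_mul, Int.natAbs_natCast]
  have hv : ∀ k, vG n g (tf k) = w k := by
    intro k
    unfold vG
    split
    · rename_i h0
      have hcnt0 : cntF n S k = 0 := by
        rw [← hlev k, h0]
        rfl
      have hneg : w k < 0 := by
        have hres := neg_of_cnt_zero hS (k : ℕ) k.isLt (by exact hcnt0)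
        exact hres
      have hb := habs k
      rw [abs_of_neg hneg] at hb
      linarith
    · rename_i h0
      have hcpos : 0 < cntF n S k := by
        rcases Nat.eq_zero_or_pos (cntF n S k) with hc0 | hc
        · exfalso
          apply h0
          rw [hgt k, hc0]
          simp
        · exact hc
      have hsign : Int.sign (g (tf k)) = Int.sign (w k) := by
        rw [hgt k, Int.sign_mul,
          Int.sign_eq_one_iff_pos.mpr (show (0 : ℤ) < (cntF n S k : ℤ) by exact_mod_cast hcpos),
          mul_one, Int.sign_sign]
      rw [hsign, show ((tf k : ℕ) + 1 : ℤ) = |w k| from (habs k).symm]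
      exact Int.sign_mul_abs (w k)
  have hkey : ∀ k, keyG n g (tf k) = (cntF n S k : ℤ) * (2 * n + 2) - w k := by
    intro k
    unfold keyG
    rw [hlev k, hv k]
  have hcnt_succ : ∀ a b : Fin n, (b : ℕ) = (a : ℕ) + 1 →
      cntF n S b = cntF n S a + (if b ∈ Finset.univ \ S then 1 else 0) := by
    intro a b hab
    unfold cntF
    exact cntT_succ _ a b hab
  have hmono : Monotone (keyG n g ∘ τ) := by
    apply fin_mono_of_succ
    intro a b hab
    simp only [Function.comp_apply]
    rw [hτap, hτap, hkey a, hkey b]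
    by_cases hbS : b ∈ S
    · have hc : cntF n S b = cntF n S a := by
        rw [hcnt_succ a b hab, if_neg (by simp [hbS])]
        omega
      have hdesc := hS hbS
      simp only [descSet, Finset.mem_filter, Finset.mem_univ, true_and] at hdesc
      rw [if_neg (by omega)] at hdesc
      have hidx : (⟨(b : ℕ) - 1, lt_of_le_of_lt (Nat.sub_le _ _) b.isLt⟩ : Fin n) = a :=
        Fin.ext (by simp; omega)
      rw [hidx] at hdesc
      rw [hc]
      linarith
    · have hc : (cntF n S b : ℤ) = (cntF n S a : ℤ) + 1 := by
        rw [hcnt_succ a b hab,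
          if_pos (by rw [Finset.mem_sdiff]; exact ⟨Finset.mem_univ _, hbS⟩)]
        push_cast
        ring
      rw [hc]
      have hb2 := (hw.1 b).2
      have ha2 := (hw.1 a).2
      have hb3 : w b ≤ |w b| := le_abs_self _
      have ha3 : -|w a| ≤ w a := neg_abs_le _
      nlinarith [Int.natCast_nonneg (cntF n S a)]
  have hmonoσ : Monotone (keyG n g ∘ (sortG n g : Equiv.Perm (Fin n))) := key_sorted g
  have hcomp : keyG n g ∘ (sortG n g : Equiv.Perm (Fin n)) = keyG n g ∘ τ :=
    Tuple.unique_monotone hmonoσ hmono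
  have hστ : ∀ k, sortG n g k = tf k := by
    intro k
    apply keyG_inj (g := g)
    have := congrFun hcomp k
    simpa [hτap] using this
  refine ⟨?_, ?_⟩
  · funext k
    unfold PhiW
    rw [hστ k]
    exact hv k
  · have hlev' : ∀ j, levP n g j = cntF n S j := by
      intro j
      unfold levP
      rw [hστ j]
      exact hlev j
    ext k
    simp only [PhiS, Finset.mem_filter, Finset.mem_univ, true_and]
    rw [hlev' k]
    unfold prevLevP
    by_cases h0 : (k : ℕ) = 0
    · rw [if_pos h0]
      unfold cntF
      rw [cntT_zero _ k h0]
      by_cases hkS : k ∈ S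
      · rw [if_neg (by simp [hkS])]
        simp [hkS]
      · rw [if_pos (by rw [Finset.mem_sdiff]; exact ⟨Finset.mem_univ _, hkS⟩)]
        simp [hkS]
    · rw [if_neg h0]
      rw [hlev' ⟨(k : ℕ) - 1, lt_of_le_of_lt (Nat.sub_le _ _) k.isLt⟩]
      have hrel := hcnt_succ ⟨(k : ℕ) - 1, lt_of_le_of_lt (Nat.sub_le _ _) k.isLt⟩ k
        (by simp; omega)
      by_cases hkS : k ∈ S
      · rw [if_neg (by simp [hkS])] at hrel
        simp only [add_zero] at hrel
        simp [hrel, hkS]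
      · rw [if_pos (by rw [Finset.mem_sdiff]; exact ⟨Finset.mem_univ _, hkS⟩)] at hrel
        constructor
        · intro hcc
          omega
        · intro hcc
          exact absurd hcc hkS

end Stmt9
namespace Stmt9

open Classical in
noncomputable def GF (n m : ℕ) : Finset (Fin n → ℤ) :=
  (Fintype.piFinset fun _ : Fin n => Finset.Icc (-(m : ℤ)) m).filter (IsG n m)

lemma mem_GF_iff {n m : ℕ} {g : Fin n → ℤ} : g ∈ GF n m ↔ IsG n m g := by
  classical
  unfold GF
  rw [Finset.mem_filter, Fintype.mem_piFinset]
  constructor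
  · exact fun h => h.2
  · intro h
    refine ⟨fun i => ?_, h⟩
    rw [Finset.mem_Icc]
    have := h.1 i
    omega

lemma dB_eq_GF_card (n m : ℕ) : dB n m = (GF n m).card := by
  have h1 : {c : Fin m → Finset ℤ |
      (∀ k l : Fin m, k < l → c l ⊂ c k) ∧ ∀ k, c k ∈ calB n} = {c | IsChn n m c} := rfl
  rw [dB, h1, ← Set.ncard_coe_finset]
  have himg : BMap n m '' {c | IsChn n m c} = ↑(GF n m) := by
    ext g
    simp only [Set.mem_image, Set.mem_setOf_eq, Finset.mem_coe, mem_GF_iff]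
    constructor
    · rintro ⟨c, hc, rfl⟩
      exact BMap_isG hc
    · intro hg
      exact ⟨AMap n m g, AMap_isChn hg, BMap_AMap hg⟩
  rw [← himg, Set.ncard_image_of_injOn]
  intro c hc c' hc' h
  rw [Set.mem_setOf_eq] at hc hc'
  rw [← AMap_BMap hc, ← AMap_BMap hc', h]

open Classical in
noncomputable def PF (n m : ℕ) : Finset ((_ : Fin n → ℤ) × Finset (Fin n)) :=
  ((Fintype.piFinset fun _ : Fin n => Finset.Icc (-(n : ℤ)) n).filter
    (SignedPerm n)).sigma fun w => (descSet n w).powersetCard (n - m)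

lemma SP_mem_pi {n : ℕ} {w : Fin n → ℤ} (hw : SignedPerm n w) :
    w ∈ Fintype.piFinset fun _ : Fin n => Finset.Icc (-(n : ℤ)) n := by
  rw [Fintype.mem_piFinset]
  intro k
  rw [Finset.mem_Icc]
  have h1 := (hw.1 k).2
  have h2 : -|w k| ≤ w k := neg_abs_le _
  have h3 : w k ≤ |w k| := le_abs_self _
  constructor <;> linarith

open Classical in
lemma mem_PF_iff {n m : ℕ} {p : (_ : Fin n → ℤ) × Finset (Fin n)} :
    p ∈ PF n m ↔ SignedPerm n p.1 ∧ p.2 ⊆ descSet n p.1 ∧ p.2.card = n - m := by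
  unfold PF
  rw [Finset.mem_sigma, Finset.mem_filter, Finset.mem_powersetCard]
  constructor
  · rintro ⟨⟨-, h1⟩, h2, h3⟩
    exact ⟨h1, h2, h3⟩
  · rintro ⟨h1, h2, h3⟩
    exact ⟨⟨SP_mem_pi h1, h1⟩, h2, h3⟩

lemma GF_card_eq_PF_card (n m : ℕ) (hmn : m ≤ n) : (GF n m).card = (PF n m).card := by
  refine Finset.card_bij'
    (fun g _ => (⟨PhiW n g, PhiS n g⟩ : (_ : Fin n → ℤ) × Finset (Fin n)))
    (fun p _ => PsiMap n p.1 p.2) ?_ ?_ ?_ ?_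
  · intro g hg
    have hgG : IsG n m g := mem_GF_iff.mp hg
    rw [mem_PF_iff]
    exact ⟨PhiW_signedPerm g, PhiS_subset g, PhiS_card hgG⟩
  · intro p hp
    rw [mem_PF_iff] at hp
    exact mem_GF_iff.mpr (Psi_isG hp.1 hp.2.2 hmn)
  · intro g hg
    exact Psi_Phi (mem_GF_iff.mp hg)
  · intro p hp
    rw [mem_PF_iff] at hp
    obtain ⟨h1, h2⟩ := Phi_Psi hp.1 hp.2.1
    cases p with
    | mk w S =>
      simp only at h1 h2
      exact Sigma.ext h1 (heq_of_eq h2)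

open Classical in
lemma L1 (n m : ℕ) (hmn : m ≤ n) :
    dB n m = ∑ w ∈ (Fintype.piFinset fun _ : Fin n => Finset.Icc (-(n : ℤ)) n).filter
      (SignedPerm n), ((descSet n w).card.choose (n - m)) := by
  rw [dB_eq_GF_card, GF_card_eq_PF_card n m hmn]
  unfold PF
  rw [Finset.card_sigma]
  apply Finset.sum_congr rfl
  intro w hw
  rw [Finset.card_powersetCard]

end Stmt9


open Classical in
/-- In `ℤ[t]`: `Σ_{m=0}^{n} d_m(n)·(t-1)^{n-m} = Σ_w t^{|Desc(w)|}`, the sum running over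
all `2^n·n!` signed permutations `w` of `{1, …, n}`; in particular `β_{2i}(X(B_n))` equals
the number of signed permutations with exactly `i` descents. -/
theorem stmt9 (n : ℕ) (hn : 1 ≤ n) :
    (∑ m ∈ Finset.range (n + 1), (dB n m : Polynomial ℤ) * (Polynomial.X - 1) ^ (n - m))
      = ∑ w ∈ Fintype.piFinset (fun _ : Fin n => Finset.Icc (-(n : ℤ)) (n : ℤ)),
          (if SignedPerm n w then Polynomial.X ^ (descSet n w).card else 0)
    ∧ ∀ i : ℕ,
        (∑ m ∈ Finset.range (n + 1),
            (dB n m : Polynomial ℤ) * (Polynomial.X - 1) ^ (n - m)).coeff i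
          = (Set.ncard {w : Fin n → ℤ | SignedPerm n w ∧ (descSet n w).card = i} : ℤ) := by
  classical
  open Stmt9 in
  set SF := (Fintype.piFinset fun _ : Fin n => Finset.Icc (-(n : ℤ)) (n : ℤ)).filter
    (SignedPerm n) with hSF
  have hdesc_le : ∀ w : Fin n → ℤ, (descSet n w).card ≤ n := by
    intro w
    calc (descSet n w).card ≤ (Finset.univ : Finset (Fin n)).card :=
          Finset.card_le_card (Finset.filter_subset _ _)
    _ = n := by simp
  have hXpow : ∀ w ∈ SF, (Polynomial.X : Polynomial ℤ) ^ (descSet n w).card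
      = ∑ j ∈ Finset.range (n + 1),
          ((descSet n w).card.choose j : Polynomial ℤ) * (Polynomial.X - 1) ^ j := by
    intro w _
    have hX : (Polynomial.X : Polynomial ℤ) = (Polynomial.X - 1) + 1 := by ring
    have h1 : (Polynomial.X : Polynomial ℤ) ^ (descSet n w).card
        = ∑ j ∈ Finset.range ((descSet n w).card + 1),
            ((descSet n w).card.choose j : Polynomial ℤ) * (Polynomial.X - 1) ^ j := by
      rw [hX, add_pow]
      apply Finset.sum_congr rfl
      intro j hj
      ring
    rw [h1]
    apply Finset.sum_subset (Finset.range_subset_range.mpr (Nat.succ_le_succ (hdesc_le w)))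
    intro j hj hnj
    rw [Finset.mem_range, not_lt] at hnj
    rw [Nat.choose_eq_zero_of_lt (by omega)]
    simp
  have hmain :
      (∑ m ∈ Finset.range (n + 1), (dB n m : Polynomial ℤ) * (Polynomial.X - 1) ^ (n - m))
      = ∑ w ∈ SF, (Polynomial.X : Polynomial ℤ) ^ (descSet n w).card := by
    have hRHS : ∑ w ∈ SF, (Polynomial.X : Polynomial ℤ) ^ (descSet n w).card
        = ∑ j ∈ Finset.range (n + 1),
            (∑ w ∈ SF, ((descSet n w).card.choose j : Polynomial ℤ))
              * (Polynomial.X - 1) ^ j := by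
      rw [Finset.sum_congr rfl hXpow, Finset.sum_comm]
      apply Finset.sum_congr rfl
      intro j _
      rw [Finset.sum_mul]
    rw [hRHS]
    have hL : ∀ m ∈ Finset.range (n + 1),
        (dB n m : Polynomial ℤ) * (Polynomial.X - 1) ^ (n - m)
        = (∑ w ∈ SF, ((descSet n w).card.choose (n - m) : Polynomial ℤ))
            * (Polynomial.X - 1) ^ (n - m) := by
      intro m hm
      rw [Finset.mem_range] at hm
      rw [Stmt9.L1 n m (by omega)]
      push_cast
      ring
    rw [Finset.sum_congr rfl hL]
    have hrefl := Finset.sum_range_reflect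
      (fun j => (∑ w ∈ SF, ((descSet n w).card.choose j : Polynomial ℤ))
        * (Polynomial.X - 1) ^ j) (n + 1)
    simp only [Nat.add_sub_cancel] at hrefl
    exact hrefl
  have hfilter : ∑ w ∈ Fintype.piFinset (fun _ : Fin n => Finset.Icc (-(n : ℤ)) (n : ℤ)),
      (if SignedPerm n w then (Polynomial.X : Polynomial ℤ) ^ (descSet n w).card else 0)
      = ∑ w ∈ SF, (Polynomial.X : Polynomial ℤ) ^ (descSet n w).card := by
    rw [hSF, Finset.sum_filter]
  constructor
  · rw [hfilter]
    exact hmain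
  · intro i
    rw [hmain, Polynomial.finset_sum_coeff]
    have hco : ∀ w ∈ SF, ((Polynomial.X : Polynomial ℤ) ^ (descSet n w).card).coeff i
        = (if i = (descSet n w).card then (1 : ℤ) else 0) := by
      intro w _
      rw [Polynomial.coeff_X_pow]
    rw [Finset.sum_congr rfl hco, Finset.sum_boole]
    have hset : {w : Fin n → ℤ | SignedPerm n w ∧ (descSet n w).card = i}
        = ↑(SF.filter fun w => i = (descSet n w).card) := by
      ext w
      simp only [Set.mem_setOf_eq, Finset.coe_filter, Set.mem_setOf_eq, hSF,
        Finset.mem_filter]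
      constructor
      · rintro ⟨h1, h2⟩
        exact ⟨⟨Stmt9.SP_mem_pi h1, h1⟩, h2.symm⟩
      · rintro ⟨⟨-, h1⟩, h2⟩
        exact ⟨h1, h2.symm⟩
    rw [hset, Set.ncard_coe_finset]
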